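/- (Coherence properties of the global models.) In any imprecise probability tree, for any situation s, any extended real variables f, g : Ω → ℝ ∪ {−∞,+∞}, any real λ ≥ 0 and any real μ: (1) E(f|s) ≥ inf{f(ω) : ω ∈ ⟦s⟧}; (2) E(f+g|s) ≥ E(f|s) + E(g|s); (3) E(λf|s) = λ E(f|s); (4) if the event {ω ∈ ⟦s⟧ : f(ω) > g(ω)} is strictly null, then E(f|s) ≤ E(g|s) and Ē(f|s) ≤ Ē(g|s); (5) inf{f(ω) : ω ∈ ⟦s⟧} ≤ E(f|s) ≤ Ē(f|s) ≤ sup{f(ω) : ω ∈ ⟦s⟧}; (6) E(f+μ|s) = E(f|s) + μ and Ē(f+μ|s) = Ē(f|s) + μ. -/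

import Mathlib

open Filter Topology

namespace IP

/-- A situation of length `n`: a tuple of the first `n` states. -/
abbrev Sit (𝒳 : ℕ → Type) (n : ℕ) := (i : Fin n) → 𝒳 i

/-- A path: an infinite sequence of states. -/
abbrev Path (𝒳 : ℕ → Type) := (i : ℕ) → 𝒳 i

/-- The initial segment `ω^n` of a path. -/
def res {𝒳 : ℕ → Type} (ω : Path 𝒳) (n : ℕ) : Sit 𝒳 n := fun i => ω i

/-- The initial (empty) situation `□`. -/
def emptySit {𝒳 : ℕ → Type} : Sit 𝒳 0 := fun i => i.elim0

/-- Append a next state to a situation. -/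
def snoc {𝒳 : ℕ → Type} {n : ℕ} (s : Sit 𝒳 n) (x : 𝒳 n) : Sit 𝒳 (n + 1) := fun i =>
  if h : (i : ℕ) < n then s ⟨i, h⟩
  else cast (congrArg 𝒳 (Nat.le_antisymm (Nat.le_of_not_lt h) (Nat.lt_succ_iff.mp i.isLt))) x

/-- Truncate a situation of length `n` to its first `k` states. -/
def trunc {𝒳 : ℕ → Type} {n : ℕ} (s : Sit 𝒳 n) (k : ℕ) (h : k ≤ n) : Sit 𝒳 k :=
  fun i => s ⟨i, lt_of_lt_of_le i.isLt h⟩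

/-- A (coherent) lower expectation on a nonempty finite set. -/
def IsLE {Y : Type} [Fintype Y] [Nonempty Y] (E : (Y → ℝ) → ℝ) : Prop :=
  (∀ f : Y → ℝ, (⨅ y, f y) ≤ E f) ∧
  (∀ f g : Y → ℝ, E f + E g ≤ E (fun y => f y + g y)) ∧
  (∀ (f : Y → ℝ) (c : ℝ), 0 ≤ c → E (fun y => c * f y) = c * E f)

/-- Submartingale w.r.t. the local models `Q` of an imprecise probability tree. -/
def IsSubmartingale {𝒳 : ℕ → Type} (Q : ∀ n, Sit 𝒳 n → (𝒳 n → ℝ) → ℝ)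
    (F : ∀ n, Sit 𝒳 n → ℝ) : Prop :=
  ∀ (n : ℕ) (s : Sit 𝒳 n), 0 ≤ Q n s (fun x => F (n + 1) (snoc s x) - F n s)

/-- Supermartingale: `-F` is a submartingale. -/
def IsSupermartingale {𝒳 : ℕ → Type} (Q : ∀ n, Sit 𝒳 n → (𝒳 n → ℝ) → ℝ)
    (F : ∀ n, Sit 𝒳 n → ℝ) : Prop :=
  IsSubmartingale Q (fun n s => -F n s)

/-- A test supermartingale: nonnegative, starting at 1. -/
def IsTestSupermartingale {𝒳 : ℕ → Type} (Q : ∀ n, Sit 𝒳 n → (𝒳 n → ℝ) → ℝ)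
    (F : ∀ n, Sit 𝒳 n → ℝ) : Prop :=
  IsSupermartingale Q F ∧ (∀ n s, 0 ≤ F n s) ∧ F 0 emptySit = 1

/-- An event is strictly null if some test supermartingale converges to `+∞` on it. -/
def StrictlyNull {𝒳 : ℕ → Type} (Q : ∀ n, Sit 𝒳 n → (𝒳 n → ℝ) → ℝ)
    (A : Set (Path 𝒳)) : Prop :=
  ∃ F : ∀ n, Sit 𝒳 n → ℝ, IsTestSupermartingale Q F ∧
    ∀ ω ∈ A, Tendsto (fun n => F n (res ω n)) atTop atTop

/-- `limsup_n F(ω^n)` as an extended real. -/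
noncomputable def pathLimsup {𝒳 : ℕ → Type} (F : ∀ n, Sit 𝒳 n → ℝ) (ω : Path 𝒳) : EReal :=
  Filter.limsup (fun n => (F n (res ω n) : EReal)) atTop

/-- `liminf_n F(ω^n)` as an extended real. -/
noncomputable def pathLiminf {𝒳 : ℕ → Type} (F : ∀ n, Sit 𝒳 n → ℝ) (ω : Path 𝒳) : EReal :=
  Filter.liminf (fun n => (F n (res ω n) : EReal)) atTop

/-- A real process bounded above. -/
def BddAbv {𝒳 : ℕ → Type} (F : ∀ n, Sit 𝒳 n → ℝ) : Prop := ∃ B : ℝ, ∀ n s, F n s ≤ B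

/-- A real process bounded below. -/
def BddBlw {𝒳 : ℕ → Type} (F : ∀ n, Sit 𝒳 n → ℝ) : Prop := ∃ B : ℝ, ∀ n s, B ≤ F n s

/-- Conditional global lower expectation `E(f|s)` of an extended real variable. -/
noncomputable def lexp {𝒳 : ℕ → Type} (Q : ∀ n, Sit 𝒳 n → (𝒳 n → ℝ) → ℝ) {n : ℕ}
    (s : Sit 𝒳 n) (f : Path 𝒳 → EReal) : EReal :=
  sSup ((fun F : ∀ k, Sit 𝒳 k → ℝ => (F n s : EReal)) ''
    {F : ∀ k, Sit 𝒳 k → ℝ | IsSubmartingale Q F ∧ BddAbv F ∧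
      ∀ ω : Path 𝒳, res ω n = s → pathLimsup F ω ≤ f ω})

/-- Conditional global upper expectation `Ē(f|s)`. -/
noncomputable def uexp {𝒳 : ℕ → Type} (Q : ∀ n, Sit 𝒳 n → (𝒳 n → ℝ) → ℝ) {n : ℕ}
    (s : Sit 𝒳 n) (f : Path 𝒳 → EReal) : EReal :=
  - lexp Q s (fun ω => - f ω)

/-- The local models of a (time-homogeneous) imprecise Markov chain with initial model `E1`
and transition models `QT`. -/
def markovQ {X : Type} (E1 : (X → ℝ) → ℝ) (QT : X → (X → ℝ) → ℝ) :
    ∀ n, Sit (fun _ => X) n → (X → ℝ) → ℝ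
  | 0, _ => E1
  | n + 1, s => QT (s ⟨n, Nat.lt_succ_self n⟩)

/-- Prefix a path with a situation (fixed state space). -/
def prependX {X : Type} {n : ℕ} (s : Sit (fun _ => X) n) (ω : ℕ → X) : ℕ → X :=
  fun i => if h : i < n then s ⟨i, h⟩ else ω (i - n)

/-- Extension of a lower transition operator to extended real maps. -/
noncomputable def Text {X : Type} (T : (X → ℝ) → X → ℝ) (g : X → EReal) : X → EReal :=
  fun x => sSup ((fun h : X → ℝ => (T h x : EReal)) '' {h : X → ℝ | ∀ y, (h y : EReal) ≤ g y})

/-- The variation (semi)norm `max h - min h`. -/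
noncomputable def varnorm {X : Type} [Fintype X] [Nonempty X] (h : X → ℝ) : ℝ :=
  (⨆ x, h x) - ⨅ x, h x

/-- The (weak) coefficient of ergodicity of a lower transition operator. -/
noncomputable def coeff {X : Type} [Fintype X] [Nonempty X] (S : (X → ℝ) → X → ℝ) : ℝ :=
  sSup {v : ℝ | ∃ h : X → ℝ, (∀ x, 0 ≤ h x ∧ h x ≤ 1) ∧ v = varnorm (S h)}

/-- Extend a situation to a path, arbitrarily. -/
noncomputable def extend {𝒳 : ℕ → Type} [∀ k, Nonempty (𝒳 k)] {n : ℕ} (t : Sit 𝒳 n) :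
    Path 𝒳 :=
  fun i => if h : i < n then t ⟨i, h⟩ else Classical.arbitrary (𝒳 i)


section Helpers
set_option linter.unusedSectionVars false

variable {𝒳 : ℕ → Type} [∀ k, Fintype (𝒳 k)] [∀ k, Nonempty (𝒳 k)]
  {Q : ∀ n, Sit 𝒳 n → (𝒳 n → ℝ) → ℝ} {F G : ∀ k, Sit 𝒳 k → ℝ}

/-! ### Local model facts -/

lemma Q_zero (hQ : ∀ n s, IsLE (Q n s)) (n : ℕ) (s : Sit 𝒳 n) : Q n s (fun _ => 0) = 0 := by
  have := (hQ n s).2.2 (fun _ => (0 : ℝ)) 0 le_rfl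
  simpa using this

lemma exists_nonneg_of_Q_nonneg (hQ : ∀ n s, IsLE (Q n s)) {n : ℕ} {s : Sit 𝒳 n}
    {d : 𝒳 n → ℝ} (h0 : 0 ≤ Q n s d) : ∃ x, ∀ y, d y ≤ d x ∧ 0 ≤ d x := by
  obtain ⟨x, hx⟩ := Finite.exists_max d
  refine ⟨x, fun y => ⟨hx y, ?_⟩⟩
  have h1 := (hQ n s).2.1 d (fun z => -d z)
  have h2 : Q n s (fun z => d z + -d z) = 0 := by
    have : (fun z => d z + -d z) = (fun _ => (0:ℝ)) := by funext z; ring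
    rw [this, Q_zero hQ]
  have h3 : (⨅ z, -d z) ≤ Q n s (fun z => -d z) := (hQ n s).1 _
  have h4 : -d x ≤ ⨅ z, -d z := le_ciInf (fun z => by simpa using hx z)
  linarith
/-! ### Greedy path -/

noncomputable def greedyAux (F : ∀ k, Sit 𝒳 k → ℝ) {n : ℕ} (s : Sit 𝒳 n) : ∀ m, Sit 𝒳 (n + m)
  | 0 => s
  | m + 1 => snoc (greedyAux F s m)
      (Classical.choose (Finite.exists_max
        (fun x : 𝒳 (n + m) => F (n + m + 1) (snoc (greedyAux F s m) x))))

noncomputable def greedyPath (F : ∀ k, Sit 𝒳 k → ℝ) {n : ℕ} (s : Sit 𝒳 n) : Path 𝒳 :=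
  fun i => if h : i < n then s ⟨i, h⟩ else (greedyAux F s (i + 1 - n)) ⟨i, by omega⟩

lemma greedyAux_congr (F : ∀ k, Sit 𝒳 k → ℝ) {n : ℕ} (s : Sit 𝒳 n) {k k' : ℕ} (e : k = k')
    (j : ℕ) (h : j < n + k) (h' : j < n + k') :
    greedyAux F s k ⟨j, h⟩ = greedyAux F s k' ⟨j, h'⟩ := by
  subst e; rfl

lemma greedyAux_res (F : ∀ k, Sit 𝒳 k → ℝ) {n : ℕ} (s : Sit 𝒳 n) :
    ∀ m (i : Fin (n + m)), greedyAux F s m i = greedyPath F s i := by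
  intro m
  induction m with
  | zero =>
    intro i
    have hi : (i : ℕ) < n := i.isLt
    simp only [greedyPath, dif_pos hi]
    show s i = s ⟨i, hi⟩
    congr
  | succ m ih =>
    intro i
    by_cases hc : (i : ℕ) < n + m
    · show snoc (greedyAux F s m) _ i = _
      rw [snoc]
      rw [dif_pos hc]
      exact ih ⟨i, hc⟩
    · have hn : ¬ (i : ℕ) < n := by omega
      have e : (i : ℕ) + 1 - n = m + 1 := by omega
      simp only [greedyPath, dif_neg hn]
      simpa using (greedyAux_congr F s e (i : ℕ) (by omega) i.isLt).symm

lemma res_greedyPath (F : ∀ k, Sit 𝒳 k → ℝ) {n : ℕ} (s : Sit 𝒳 n) (m : ℕ) :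
    res (greedyPath F s) (n + m) = greedyAux F s m := by
  funext i
  exact (greedyAux_res F s m i).symm

lemma res_greedyPath_zero (F : ∀ k, Sit 𝒳 k → ℝ) {n : ℕ} (s : Sit 𝒳 n) :
    res (greedyPath F s) n = s :=
  res_greedyPath F s 0

lemma greedy_mono (hQ : ∀ n s, IsLE (Q n s)) {F : ∀ k, Sit 𝒳 k → ℝ}
    (hF : IsSubmartingale Q F) {n : ℕ} (s : Sit 𝒳 n) :
    ∀ m, F n s ≤ F (n + m) (greedyAux F s m) := by
  intro m
  induction m with
  | zero => exact le_rfl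
  | succ m ih =>
    refine le_trans ih ?_
    set t := greedyAux F s m with ht
    obtain ⟨x, hx⟩ := exists_nonneg_of_Q_nonneg hQ (hF (n + m) t)
    have hch := Classical.choose_spec (Finite.exists_max
        (fun x : 𝒳 (n + m) => F (n + m + 1) (snoc t x)))
    show F (n + m) t ≤ F (n + m + 1) (snoc t _)
    have h1 : F (n + m) t ≤ F (n + m + 1) (snoc t x) := by
      have := (hx x).2
      linarith
    exact le_trans h1 (hch x)

lemma coe_le_pathLimsup_greedy (hQ : ∀ n s, IsLE (Q n s)) {F : ∀ k, Sit 𝒳 k → ℝ}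
    (hF : IsSubmartingale Q F) {n : ℕ} (s : Sit 𝒳 n) :
    (F n s : EReal) ≤ pathLimsup F (greedyPath F s) := by
  have hev : ∀ᶠ m in atTop, (F n s : EReal) ≤ (F m (res (greedyPath F s) m) : EReal) := by
    rw [eventually_atTop]
    refine ⟨n, fun m hm => ?_⟩
    obtain ⟨k, rfl⟩ := Nat.exists_eq_add_of_le hm
    rw [res_greedyPath]
    exact_mod_cast greedy_mono hQ hF s k
  calc (F n s : EReal) ≤ Filter.liminf (fun m => (F m (res (greedyPath F s) m) : EReal)) atTop :=
        le_liminf_of_le (by isBoundedDefault) hev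
    _ ≤ pathLimsup F (greedyPath F s) := liminf_le_limsup
/-! ### Basic lexp facts -/

lemma le_lexp_of_mem (hsub : IsSubmartingale Q F) (hbdd : BddAbv F) {n : ℕ} {s : Sit 𝒳 n}
    {f : Path 𝒳 → EReal} (hlim : ∀ ω : Path 𝒳, res ω n = s → pathLimsup F ω ≤ f ω) :
    (F n s : EReal) ≤ lexp Q s f :=
  le_sSup ⟨F, ⟨hsub, hbdd, hlim⟩, rfl⟩

lemma const_submartingale (hQ : ∀ n s, IsLE (Q n s)) (r : ℝ) :
    IsSubmartingale Q (fun _ _ => r) := by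
  intro k t
  have : (fun x : 𝒳 k => r - r) = (fun _ => (0:ℝ)) := by funext x; ring
  rw [this, Q_zero hQ]

lemma pathLimsup_const (r : ℝ) (ω : Path 𝒳) : pathLimsup (fun _ _ => r) ω = (r : EReal) := by
  unfold pathLimsup
  exact limsup_const _

lemma coe_le_lexp (hQ : ∀ n s, IsLE (Q n s)) {n : ℕ} {s : Sit 𝒳 n} {f : Path 𝒳 → EReal}
    (r : ℝ) (hr : ∀ ω : Path 𝒳, res ω n = s → (r : EReal) ≤ f ω) :
    (r : EReal) ≤ lexp Q s f := by
  refine le_lexp_of_mem (const_submartingale hQ r) ⟨r, fun _ _ => le_rfl⟩ (fun ω hω => ?_)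
  rw [pathLimsup_const]
  exact hr ω hω

lemma inf_le_lexp (hQ : ∀ n s, IsLE (Q n s)) {n : ℕ} (s : Sit 𝒳 n) (f : Path 𝒳 → EReal) :
    (⨅ ω ∈ {ω : Path 𝒳 | res ω n = s}, f ω) ≤ lexp Q s f := by
  refine le_of_forall_lt (fun c hc => ?_)
  obtain ⟨r, hcr, hrinf⟩ := EReal.exists_between_coe_real hc
  refine lt_of_lt_of_le hcr (coe_le_lexp hQ r (fun ω hω => ?_))
  exact le_of_lt (lt_of_lt_of_le hrinf (iInf₂_le ω hω))

lemma lexp_le_sup (hQ : ∀ n s, IsLE (Q n s)) {n : ℕ} (s : Sit 𝒳 n) (f : Path 𝒳 → EReal) :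
    lexp Q s f ≤ ⨆ ω ∈ {ω : Path 𝒳 | res ω n = s}, f ω := by
  refine sSup_le ?_
  rintro x ⟨F, ⟨hsub, hbdd, hlim⟩, rfl⟩
  calc (F n s : EReal) ≤ pathLimsup F (greedyPath F s) := coe_le_pathLimsup_greedy hQ hsub s
    _ ≤ f (greedyPath F s) := hlim _ (res_greedyPath_zero F s)
    _ ≤ ⨆ ω ∈ {ω : Path 𝒳 | res ω n = s}, f ω :=
        le_iSup₂ (f := fun ω (_ : ω ∈ {ω : Path 𝒳 | res ω n = s}) => f ω)
          (greedyPath F s) (res_greedyPath_zero F s)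

lemma lexp_mono {n : ℕ} {s : Sit 𝒳 n} {f g : Path 𝒳 → EReal}
    (h : ∀ ω : Path 𝒳, res ω n = s → f ω ≤ g ω) : lexp Q s f ≤ lexp Q s g := by
  refine sSup_le_sSup (Set.image_mono ?_)
  rintro F ⟨hsub, hbdd, hlim⟩
  exact ⟨hsub, hbdd, fun ω hω => le_trans (hlim ω hω) (h ω hω)⟩
/-! ### EReal utilities -/

lemma ereal_add_neg_coe_cancel (x : EReal) (m : ℝ) : x + (m : EReal) + ((-m : ℝ) : EReal) = x := by
  induction x with
  | bot => simp
  | coe r => norm_cast; ring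
  | top =>
    rw [EReal.top_add_coe, EReal.top_add_coe]

lemma ereal_coe_mul_le_mul {c : ℝ} (hc : 0 < c) {x y : EReal} (h : x ≤ y) :
    (c : EReal) * x ≤ (c : EReal) * y := by
  induction x with
  | bot => rw [EReal.coe_mul_bot_of_pos hc]; exact bot_le
  | coe r =>
    induction y with
    | bot => exact absurd h (by simp)
    | coe q =>
      rw [← EReal.coe_mul, ← EReal.coe_mul, EReal.coe_le_coe_iff]
      exact mul_le_mul_of_nonneg_left (EReal.coe_le_coe_iff.mp h) hc.le
    | top => rw [EReal.coe_mul_top_of_pos hc]; exact le_top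
  | top =>
    rw [top_le_iff.mp h, EReal.coe_mul_top_of_pos hc]

lemma ereal_inv_mul_cancel {c : ℝ} (hc : c ≠ 0) (x : EReal) :
    ((c⁻¹ : ℝ) : EReal) * ((c : EReal) * x) = x := by
  induction x with
  | bot =>
    rcases lt_or_gt_of_ne hc with h | h
    · rw [EReal.coe_mul_bot_of_neg h, EReal.coe_mul_top_of_neg (by simpa using h)]
    · rw [EReal.coe_mul_bot_of_pos h, EReal.coe_mul_bot_of_pos (by simpa using h)]
  | coe r => rw [← EReal.coe_mul, ← EReal.coe_mul, inv_mul_cancel_left₀ hc]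
  | top =>
    rcases lt_or_gt_of_ne hc with h | h
    · rw [EReal.coe_mul_top_of_neg h, EReal.coe_mul_bot_of_neg (by simpa using h)]
    · rw [EReal.coe_mul_top_of_pos h, EReal.coe_mul_top_of_pos (by simpa using h)]

/-- Multiplication by a positive real as an order isomorphism of `EReal`. -/
noncomputable def erealMulIso (c : ℝ) (hc : 0 < c) : EReal ≃o EReal where
  toFun x := (c : EReal) * x
  invFun x := ((c⁻¹ : ℝ) : EReal) * x
  left_inv x := ereal_inv_mul_cancel hc.ne' x
  right_inv x := by
    have := ereal_inv_mul_cancel (c := c⁻¹) (by positivity) x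
    simpa [inv_inv] using this
  map_rel_iff' := by
    intro a b
    constructor
    · intro h
      have h2 := ereal_coe_mul_le_mul (c := c⁻¹) (by positivity) h
      simp only [Equiv.coe_fn_mk] at h2
      rwa [ereal_inv_mul_cancel hc.ne', ereal_inv_mul_cancel hc.ne'] at h2
    · exact ereal_coe_mul_le_mul hc

/-- Addition of a real constant as an order isomorphism of `EReal`. -/
noncomputable def erealAddIso (m : ℝ) : EReal ≃o EReal where
  toFun x := x + (m : EReal)
  invFun x := x + ((-m : ℝ) : EReal)
  left_inv x := ereal_add_neg_coe_cancel x m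
  right_inv x := by
    have := ereal_add_neg_coe_cancel x (-m)
    simpa using this
  map_rel_iff' := by
    intro a b
    constructor
    · intro h
      have h2 := add_le_add h (le_refl ((-m : ℝ) : EReal))
      simp only [Equiv.coe_fn_mk] at h2
      rwa [ereal_add_neg_coe_cancel, ereal_add_neg_coe_cancel] at h2
    · intro h; exact add_le_add h le_rfl

lemma pathLimsup_add_const (F : ∀ k, Sit 𝒳 k → ℝ) (m : ℝ) (ω : Path 𝒳) :
    pathLimsup (fun k t => F k t + m) ω = pathLimsup F ω + (m : EReal) := by
  have : (fun k => ((F k (res ω k) + m : ℝ) : EReal))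
      = fun k => erealAddIso m ((F k (res ω k) : ℝ) : EReal) := by
    funext k
    simp [erealAddIso, EReal.coe_add]
  unfold pathLimsup
  rw [this, ← OrderIso.limsup_apply]
  rfl

lemma pathLimsup_const_mul (F : ∀ k, Sit 𝒳 k → ℝ) {c : ℝ} (hc : 0 < c) (ω : Path 𝒳) :
    pathLimsup (fun k t => c * F k t) ω = (c : EReal) * pathLimsup F ω := by
  have : (fun k => ((c * F k (res ω k) : ℝ) : EReal))
      = fun k => erealMulIso c hc ((F k (res ω k) : ℝ) : EReal) := by
    funext k
    simp [erealMulIso, EReal.coe_mul]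
  unfold pathLimsup
  rw [this, ← OrderIso.limsup_apply]
  rfl
/-! ### Submartingale arithmetic -/

lemma add_submartingale (hQ : ∀ n s, IsLE (Q n s)) (hF : IsSubmartingale Q F)
    (hG : IsSubmartingale Q G) : IsSubmartingale Q (fun k t => F k t + G k t) := by
  intro k t
  have h1 := (hQ k t).2.1 (fun x => F (k+1) (snoc t x) - F k t) (fun x => G (k+1) (snoc t x) - G k t)
  have h2 : (fun x : 𝒳 k => (F (k+1) (snoc t x) - F k t) + (G (k+1) (snoc t x) - G k t))
      = fun x => (F (k+1) (snoc t x) + G (k+1) (snoc t x)) - (F k t + G k t) := by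
    funext x; ring
  rw [h2] at h1
  have := hF k t
  have := hG k t
  linarith

lemma smul_submartingale (hQ : ∀ n s, IsLE (Q n s)) {c : ℝ} (hc : 0 ≤ c)
    (hF : IsSubmartingale Q F) : IsSubmartingale Q (fun k t => c * F k t) := by
  intro k t
  have h2 : (fun x : 𝒳 k => c * F (k+1) (snoc t x) - c * F k t)
      = fun x => c * (F (k+1) (snoc t x) - F k t) := by funext x; ring
  rw [h2, (hQ k t).2.2 _ c hc]
  exact mul_nonneg hc (hF k t)

lemma add_const_submartingale (m : ℝ)
    (hF : IsSubmartingale Q F) : IsSubmartingale Q (fun k t => F k t + m) := by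
  intro k t
  have h2 : (fun x : 𝒳 k => (F (k+1) (snoc t x) + m) - (F k t + m))
      = fun x => F (k+1) (snoc t x) - F k t := by funext x; ring
  rw [h2]
  exact hF k t

lemma limsup_coe_lt_top {u : ℕ → ℝ} {B : ℝ} (hB : ∀ k, u k ≤ B) :
    Filter.limsup (fun k => ((u k : ℝ) : EReal)) atTop ≤ (B : EReal) :=
  limsup_le_of_le (by isBoundedDefault)
    (Eventually.of_forall (fun k => EReal.coe_le_coe_iff.mpr (hB k)))

lemma pathLimsup_add_le {F G : ∀ k, Sit 𝒳 k → ℝ} (hF : BddAbv F) (hG : BddAbv G) (ω : Path 𝒳) :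
    pathLimsup (fun k t => F k t + G k t) ω ≤ pathLimsup F ω + pathLimsup G ω := by
  obtain ⟨B, hB⟩ := hF
  obtain ⟨C, hC⟩ := hG
  have hFt : pathLimsup F ω ≠ ⊤ := by
    intro h
    have h1 : pathLimsup F ω ≤ (B : EReal) := limsup_coe_lt_top (fun k => hB k _)
    rw [h] at h1
    exact absurd (lt_of_le_of_lt h1 (EReal.coe_lt_top B)) (lt_irrefl _)
  have hGt : pathLimsup G ω ≠ ⊤ := by
    intro h
    have h1 : pathLimsup G ω ≤ (C : EReal) := limsup_coe_lt_top (fun k => hC k _)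
    rw [h] at h1
    exact absurd (lt_of_le_of_lt h1 (EReal.coe_lt_top C)) (lt_irrefl _)
  have key : pathLimsup (fun k t => F k t + G k t) ω
      ≤ Filter.limsup ((fun k => ((F k (res ω k) : ℝ) : EReal)) + fun k => ((G k (res ω k) : ℝ) : EReal)) atTop := by
    unfold pathLimsup
    refine le_of_eq (congrArg (fun u => Filter.limsup u atTop) ?_)
    funext k
    simp [EReal.coe_add]
  refine le_trans key ?_
  exact EReal.limsup_add_le (Or.inr hGt) (Or.inl hFt)
/-! ### Main lexp lemmas -/

lemma lexp_superadd (hQ : ∀ n s, IsLE (Q n s)) {n : ℕ} (s : Sit 𝒳 n) (f g : Path 𝒳 → EReal) :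
    lexp Q s f + lexp Q s g ≤ lexp Q s (fun ω => f ω + g ω) := by
  refine EReal.add_le_of_forall_lt (fun a ha b hb => ?_)
  obtain ⟨x, ⟨F, ⟨hFsub, hFbdd, hFlim⟩, rfl⟩, hax⟩ := lt_sSup_iff.mp ha
  obtain ⟨y, ⟨G, ⟨hGsub, hGbdd, hGlim⟩, rfl⟩, hby⟩ := lt_sSup_iff.mp hb
  have hmem : ((F n s + G n s : ℝ) : EReal) ≤ lexp Q s (fun ω => f ω + g ω) := by
    refine le_lexp_of_mem (add_submartingale hQ hFsub hGsub) ?_ (fun ω hω => ?_)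
    · obtain ⟨B, hB⟩ := hFbdd
      obtain ⟨C, hC⟩ := hGbdd
      exact ⟨B + C, fun k t => add_le_add (hB k t) (hC k t)⟩
    · exact le_trans (pathLimsup_add_le hFbdd hGbdd ω)
        (add_le_add (hFlim ω hω) (hGlim ω hω))
  rw [EReal.coe_add] at hmem
  exact le_trans (add_le_add hax.le hby.le) hmem

lemma le_lexp_add_const (hQ : ∀ n s, IsLE (Q n s)) {n : ℕ} (s : Sit 𝒳 n)
    (f : Path 𝒳 → EReal) (m : ℝ) :
    lexp Q s f + (m : EReal) ≤ lexp Q s (fun ω => f ω + (m : EReal)) := by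
  have : lexp Q s f + (m : EReal) = erealAddIso m (sSup _) := rfl
  rw [this, OrderIso.map_sSup]
  refine iSup₂_le ?_
  rintro x ⟨F, ⟨hsub, hbdd, hlim⟩, rfl⟩
  have : erealAddIso m ((F n s : ℝ) : EReal) = ((F n s + m : ℝ) : EReal) := by
    simp [erealAddIso, EReal.coe_add]
  rw [this]
  refine le_lexp_of_mem (F := fun k t => F k t + m) (add_const_submartingale m hsub)
    ?_ (fun ω hω => ?_)
  · obtain ⟨B, hB⟩ := hbdd
    exact ⟨B + m, fun k t => by show F k t + m ≤ B + m; linarith [hB k t]⟩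
  · rw [pathLimsup_add_const]
    exact add_le_add (hlim ω hω) le_rfl

lemma lexp_add_const (hQ : ∀ n s, IsLE (Q n s)) {n : ℕ} (s : Sit 𝒳 n)
    (f : Path 𝒳 → EReal) (m : ℝ) :
    lexp Q s (fun ω => f ω + (m : EReal)) = lexp Q s f + (m : EReal) := by
  refine le_antisymm ?_ (le_lexp_add_const hQ s f m)
  have h2 := le_lexp_add_const hQ s (fun ω => f ω + (m : EReal)) (-m)
  have h3 : (fun ω => (f ω + (m : EReal)) + ((-m : ℝ) : EReal)) = f := by
    funext ω
    exact ereal_add_neg_coe_cancel (f ω) m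
  rw [h3] at h2
  have h5 := add_le_add h2 (le_refl ((m : ℝ) : EReal))
  have h6 : lexp Q s (fun ω => f ω + (m : EReal)) + ((-m : ℝ) : EReal) + (m : EReal)
      = lexp Q s (fun ω => f ω + (m : EReal)) := by
    have := ereal_add_neg_coe_cancel (lexp Q s (fun ω => f ω + (m : EReal))) (-m)
    simpa using this
  rwa [h6] at h5

lemma le_lexp_smul (hQ : ∀ n s, IsLE (Q n s)) {n : ℕ} (s : Sit 𝒳 n)
    (f : Path 𝒳 → EReal) {c : ℝ} (hc : 0 < c) :
    (c : EReal) * lexp Q s f ≤ lexp Q s (fun ω => (c : EReal) * f ω) := by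
  have : (c : EReal) * lexp Q s f = erealMulIso c hc (sSup _) := rfl
  rw [this, OrderIso.map_sSup]
  refine iSup₂_le ?_
  rintro x ⟨F, ⟨hsub, hbdd, hlim⟩, rfl⟩
  have hval : erealMulIso c hc ((F n s : ℝ) : EReal) = ((c * F n s : ℝ) : EReal) := by
    simp [erealMulIso, EReal.coe_mul]
  rw [hval]
  refine le_lexp_of_mem (F := fun k t => c * F k t) (smul_submartingale hQ hc.le hsub)
    ?_ (fun ω hω => ?_)
  · obtain ⟨B, hB⟩ := hbdd
    exact ⟨c * B, fun k t => mul_le_mul_of_nonneg_left (hB k t) hc.le⟩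
  · rw [pathLimsup_const_mul F hc]
    exact ereal_coe_mul_le_mul hc (hlim ω hω)

lemma lexp_smul (hQ : ∀ n s, IsLE (Q n s)) {n : ℕ} (s : Sit 𝒳 n)
    (f : Path 𝒳 → EReal) {c : ℝ} (hc : 0 < c) :
    lexp Q s (fun ω => (c : EReal) * f ω) = (c : EReal) * lexp Q s f := by
  refine le_antisymm ?_ (le_lexp_smul hQ s f hc)
  have h2 := le_lexp_smul hQ s (fun ω => (c : EReal) * f ω) (inv_pos.mpr hc)
  have h3 : (fun ω => ((c⁻¹ : ℝ) : EReal) * ((c : EReal) * f ω)) = f := by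
    funext ω
    exact ereal_inv_mul_cancel hc.ne' (f ω)
  rw [h3] at h2
  have h4 := ereal_coe_mul_le_mul hc h2
  have h5 : (c : EReal) * (((c⁻¹ : ℝ) : EReal) * lexp Q s (fun ω => (c : EReal) * f ω))
      = lexp Q s (fun ω => (c : EReal) * f ω) := by
    have := ereal_inv_mul_cancel (c := c⁻¹) (inv_ne_zero hc.ne')
      (lexp Q s (fun ω => (c : EReal) * f ω))
    simpa [inv_inv] using this
  rwa [h5] at h4
/-! ### Strictly null monotonicity -/

lemma lexp_null_mono (hQ : ∀ n s, IsLE (Q n s)) {n : ℕ} {s : Sit 𝒳 n} {f g : Path 𝒳 → EReal}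
    (hN : StrictlyNull Q {ω : Path 𝒳 | res ω n = s ∧ g ω < f ω}) :
    lexp Q s f ≤ lexp Q s g := by
  obtain ⟨T, ⟨hTsuper, hTnonneg, _⟩, hTtend⟩ := hN
  refine sSup_le ?_
  rintro x ⟨M, ⟨hMsub, ⟨B, hB⟩, hMlim⟩, rfl⟩
  have key : ∀ ε : ℝ, 0 < ε → ((M n s - ε * T n s : ℝ) : EReal) ≤ lexp Q s g := by
    intro ε hε
    refine le_lexp_of_mem (F := fun k t => M k t - ε * T k t) ?_
      ⟨B, fun k t => by
        show M k t - ε * T k t ≤ B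
        nlinarith [hB k t, hTnonneg k t]⟩ ?_
    · intro k t
      have hT' : 0 ≤ Q k t (fun x => -T (k+1) (snoc t x) - -T k t) := hTsuper k t
      have h2 : Q k t (fun x => ε * (-T (k+1) (snoc t x) - -T k t))
          = ε * Q k t (fun x => -T (k+1) (snoc t x) - -T k t) :=
        (hQ k t).2.2 _ ε hε.le
      have h1 := (hQ k t).2.1 (fun x => M (k+1) (snoc t x) - M k t)
        (fun x => ε * (-T (k+1) (snoc t x) - -T k t))
      have h3 : (fun x : 𝒳 k => (M (k+1) (snoc t x) - M k t)
            + ε * (-T (k+1) (snoc t x) - -T k t))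
          = fun x => (M (k+1) (snoc t x) - ε * T (k+1) (snoc t x)) - (M k t - ε * T k t) := by
        funext x; ring
      rw [h3] at h1
      have h4 := hMsub k t
      nlinarith
    · intro ω hω
      by_cases hgf : g ω < f ω
      · have htt := hTtend ω ⟨hω, hgf⟩
        have hbot : pathLimsup (fun k t => M k t - ε * T k t) ω = ⊥ := by
          rw [EReal.eq_bot_iff_forall_lt]
          intro c
          have hev : ∀ᶠ k in atTop, ((M k (res ω k) - ε * T k (res ω k) : ℝ) : EReal)
              ≤ ((c - 1 : ℝ) : EReal) := by
            filter_upwards [htt.eventually_ge_atTop ((B - c + 1) / ε)] with k hk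
            rw [div_le_iff₀ hε] at hk
            have := hB k (res ω k)
            exact EReal.coe_le_coe_iff.mpr (by nlinarith)
          calc pathLimsup (fun k t => M k t - ε * T k t) ω
              ≤ ((c - 1 : ℝ) : EReal) := limsup_le_of_le (by isBoundedDefault) hev
            _ < (c : EReal) := by exact_mod_cast sub_one_lt c
        rw [hbot]
        exact bot_le
      · have hle : pathLimsup (fun k t => M k t - ε * T k t) ω ≤ pathLimsup M ω := by
          refine limsup_le_limsup (Eventually.of_forall (fun k => ?_))
          refine EReal.coe_le_coe_iff.mpr ?_
          show M k (res ω k) - ε * T k (res ω k) ≤ M k (res ω k)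
          nlinarith [hTnonneg k (res ω k)]
        exact le_trans hle (le_trans (hMlim ω hω) (not_lt.mp hgf))
  by_cases hT0 : T n s = 0
  · have h := key 1 one_pos
    rw [hT0] at h
    simpa using h
  · have hTpos : 0 < T n s := lt_of_le_of_ne (hTnonneg n s) (Ne.symm hT0)
    by_contra hcon
    push_neg at hcon
    obtain ⟨r, h1, h2⟩ := EReal.exists_between_coe_real hcon
    have hrM : r < M n s := EReal.coe_lt_coe_iff.mp h2
    have hε : 0 < (M n s - r) / T n s := div_pos (by linarith) hTpos
    have heq : M n s - (M n s - r) / T n s * T n s = r := by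
      field_simp
      ring
    have h3 := key _ hε
    rw [heq] at h3
    exact absurd (lt_of_lt_of_le h1 h3) (lt_irrefl _)
/-! ### Misc EReal lemmas and uexp facts -/

lemma ereal_add_neg_self_nonpos (x : EReal) : x + -x ≤ 0 := by
  induction x with
  | bot => simp
  | coe r => rw [← EReal.coe_neg, ← EReal.coe_add]; norm_num
  | top => simp

lemma ereal_le_neg_of_add_nonpos {a b : EReal} (h : a + b ≤ 0) : a ≤ -b := by
  induction b with
  | bot => simp
  | coe r =>
    rw [← zero_sub]
    exact (EReal.le_sub_iff_add_le (Or.inl (EReal.coe_ne_bot r))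
      (Or.inl (EReal.coe_ne_top r))).mpr h
  | top =>
    induction a with
    | bot => simp
    | coe q => rw [EReal.coe_add_top] at h; exact absurd h (by simp)
    | top => rw [EReal.top_add_top] at h; exact absurd h (by simp)

lemma ereal_neg_add_coe (x : EReal) (m : ℝ) :
    -(x + (m : EReal)) = -x + ((-m : ℝ) : EReal) := by
  induction x with
  | bot => simp
  | coe r => norm_cast; ring
  | top => rw [EReal.top_add_coe, EReal.neg_top, EReal.bot_add]

lemma lexp_nonpos_fun (hQ : ∀ n s, IsLE (Q n s)) {n : ℕ} (s : Sit 𝒳 n)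
    {h : Path 𝒳 → EReal} (hh : ∀ ω : Path 𝒳, res ω n = s → h ω ≤ 0) :
    lexp Q s h ≤ 0 :=
  le_trans (lexp_le_sup hQ s h) (iSup₂_le (fun ω hω => hh ω hω))

lemma lexp_le_uexp (hQ : ∀ n s, IsLE (Q n s)) {n : ℕ} (s : Sit 𝒳 n) (f : Path 𝒳 → EReal) :
    lexp Q s f ≤ uexp Q s f := by
  have h1 := lexp_superadd hQ s f (fun ω => -f ω)
  have h2 : lexp Q s (fun ω => f ω + -f ω) ≤ 0 :=
    lexp_nonpos_fun hQ s (fun ω _ => ereal_add_neg_self_nonpos (f ω))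
  exact ereal_le_neg_of_add_nonpos (le_trans h1 h2)

lemma uexp_le_sup (hQ : ∀ n s, IsLE (Q n s)) {n : ℕ} (s : Sit 𝒳 n) (f : Path 𝒳 → EReal) :
    uexp Q s f ≤ ⨆ ω ∈ {ω : Path 𝒳 | res ω n = s}, f ω := by
  refine EReal.neg_le_of_neg_le ?_
  refine le_trans ?_ (inf_le_lexp hQ s (fun ω => -f ω))
  refine le_iInf₂ (fun ω hω => ?_)
  exact EReal.neg_le_neg_iff.mpr
    (le_iSup₂ (f := fun ω (_ : ω ∈ {ω : Path 𝒳 | res ω n = s}) => f ω) ω hω)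

lemma lexp_zero (hQ : ∀ n s, IsLE (Q n s)) {n : ℕ} (s : Sit 𝒳 n) :
    lexp Q s (fun _ => (0 : EReal)) = 0 := by
  refine le_antisymm (lexp_nonpos_fun hQ s (fun ω _ => le_rfl)) ?_
  have := coe_le_lexp (s := s) (f := fun _ => (0 : EReal)) hQ 0 (fun ω _ => by norm_num)
  simpa using this

end Helpers

/-- Coherence properties of the global models. -/
theorem global_coherence {𝒳 : ℕ → Type} [∀ n, Fintype (𝒳 n)] [∀ n, Nonempty (𝒳 n)]
    (Q : ∀ n, Sit 𝒳 n → (𝒳 n → ℝ) → ℝ) (hQ : ∀ n s, IsLE (Q n s))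
    {n : ℕ} (s : Sit 𝒳 n) (f g : Path 𝒳 → EReal) (lam : ℝ) (hlam : 0 ≤ lam) (mu : ℝ) :
    ((⨅ ω ∈ {ω : Path 𝒳 | res ω n = s}, f ω) ≤ lexp Q s f)
    ∧ (lexp Q s f + lexp Q s g ≤ lexp Q s (fun ω => f ω + g ω))
    ∧ (lexp Q s (fun ω => (lam : EReal) * f ω) = (lam : EReal) * lexp Q s f)
    ∧ (StrictlyNull Q {ω : Path 𝒳 | res ω n = s ∧ g ω < f ω} →
        lexp Q s f ≤ lexp Q s g ∧ uexp Q s f ≤ uexp Q s g)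
    ∧ ((⨅ ω ∈ {ω : Path 𝒳 | res ω n = s}, f ω) ≤ lexp Q s f
        ∧ lexp Q s f ≤ uexp Q s f
        ∧ uexp Q s f ≤ ⨆ ω ∈ {ω : Path 𝒳 | res ω n = s}, f ω)
    ∧ (lexp Q s (fun ω => f ω + (mu : EReal)) = lexp Q s f + (mu : EReal)
        ∧ uexp Q s (fun ω => f ω + (mu : EReal)) = uexp Q s f + (mu : EReal)) := by
  refine ⟨inf_le_lexp hQ s f, lexp_superadd hQ s f g, ?_, ?_, 
    ⟨inf_le_lexp hQ s f, lexp_le_uexp hQ s f, uexp_le_sup hQ s f⟩, 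
    lexp_add_const hQ s f mu, ?_⟩
  · -- scaling
    rcases hlam.eq_or_lt with h0 | hpos
    · subst h0
      simp only [EReal.coe_zero, zero_mul]
      exact lexp_zero hQ s
    · exact lexp_smul hQ s f hpos
  · -- strictly null
    intro hN
    refine ⟨lexp_null_mono hQ hN, ?_⟩
    have hset : {ω : Path 𝒳 | res ω n = s ∧ (fun ω => -f ω) ω < (fun ω => -g ω) ω}
        = {ω : Path 𝒳 | res ω n = s ∧ g ω < f ω} := by
      ext ω
      simp only [Set.mem_setOf_eq, EReal.neg_lt_neg_iff]
    have hN' : StrictlyNull Q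
        {ω : Path 𝒳 | res ω n = s ∧ (fun ω => -f ω) ω < (fun ω => -g ω) ω} := by
      rw [hset]; exact hN
    have := lexp_null_mono (f := fun ω => -g ω) (g := fun ω => -f ω) hQ hN'
    exact EReal.neg_le_neg_iff.mpr this
  · -- uexp add const
    show -(lexp Q s fun ω => -(f ω + (mu : EReal))) = -(lexp Q s fun ω => -f ω) + (mu : EReal)
    have h1 : (fun ω => -(f ω + (mu : EReal))) = fun ω => -f ω + ((-mu : ℝ) : EReal) := by
      funext ω
      exact ereal_neg_add_coe (f ω) mu
    rw [h1, lexp_add_const hQ s (fun ω => -f ω) (-mu)]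
    have h2 := ereal_neg_add_coe (lexp Q s fun ω => -f ω) (-mu)
    rw [h2]
    norm_num

end IP
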